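/- Given constants A, M ≥ 0, λ₁ < 1 ≤ B and a sequence (aₙ) of nonnegative reals with aₙ → 0, there exist ε₀ > 0 and C, λ > 0 such that the following holds: for every sequence {L_i}_{i≥1} of Markov linear operators B_s → B_s satisfying (ML1) with constants A, B, M, λ₁, (ML2) with some ε ≤ ε₀ and a Markov operator L₀, and (ML3) for L₀ with the sequence (aₙ), one has ‖L^{(j,j+n−1)} g‖_s ≤ C e^{−λ n} ‖g‖_s for all j, n ≥ 1 and every g ∈ V_s (exponential loss of memory). -/
import Mathlib


open Filter MeasureTheory

/-- The sequential composition `L_{i+n} ∘ ⋯ ∘ L_{i+1}` of a sequence of operators. -/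
def opComp {V : Type*} [AddCommGroup V] [Module ℝ V]
    (L : ℕ → Module.End ℝ V) (i : ℕ) : ℕ → Module.End ℝ V
  | 0 => 1
  | n + 1 => L (i + n + 1) * opComp L i n

lemma opComp_add {V : Type*} [AddCommGroup V] [Module ℝ V]
    (L : ℕ → Module.End ℝ V) (i m : ℕ) :
    ∀ n, opComp L i (m + n) = opComp L (i + m) n * opComp L i m := by
  intro n
  induction n with
  | zero => simp [opComp]
  | succ n ih =>
    show opComp L i ((m + n) + 1) = _
    rw [show opComp L i ((m+n)+1) = L (i + (m+n) + 1) * opComp L i (m+n) from rfl, ih]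
    show _ = (L ((i+m) + n + 1) * opComp L (i+m) n) * opComp L i m
    rw [mul_assoc]
    congr 3
    omega

lemma half_pow_le {N n : ℕ} (hN : 1 ≤ N) :
    ((1:ℝ)/2) ^ (n / (2*N)) ≤ 2 * Real.exp (-(Real.log 2 / (2*N)) * n) := by
  have h2N : (0:ℝ) < 2*(N:ℝ) := by positivity
  have hlog : (0:ℝ) < Real.log 2 := Real.log_pos one_lt_two
  have h3 : n < 2*N*(n/(2*N)) + 2*N := by
    have h1 := Nat.div_add_mod n (2*N)
    have h2 : n % (2*N) < 2*N := Nat.mod_lt _ (by omega)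
    omega
  have hltR : (n:ℝ) < 2*(N:ℝ)*((n/(2*N) : ℕ):ℝ) + 2*(N:ℝ) := by exact_mod_cast h3
  set q := n / (2*N) with hq
  have key : ((1:ℝ)/2)^q = Real.exp (-(q * Real.log 2)) := by
    calc ((1:ℝ)/2)^q = Real.exp (Real.log (1/2)) ^ q := by rw [Real.exp_log]; norm_num
      _ = Real.exp (q * Real.log (1/2)) := (Real.exp_nat_mul _ q).symm
      _ = Real.exp (-(q * Real.log 2)) := by rw [one_div, Real.log_inv]; ring_nf
  have h2e : 2 * Real.exp (-(Real.log 2 / (2*(N:ℝ))) * n)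
      = Real.exp (Real.log 2 + -(Real.log 2 / (2*(N:ℝ))) * n) := by
    rw [Real.exp_add, Real.exp_log two_pos]
  rw [key, h2e]
  apply Real.exp_le_exp.mpr
  have hdiv : Real.log 2 / (2*(N:ℝ)) * n ≤ Real.log 2 * (q+1) := by
    rw [div_mul_eq_mul_div, div_le_iff₀ h2N]
    nlinarith
  linarith


set_option maxHeartbeats 2000000 in
/-- Given constants `A, M ≥ 0`, `λ₁ < 1 ≤ B` and a null sequence
`(aₙ)` of nonnegative reals, there exist `ε₀ > 0` and `C, λ > 0` such that every sequence
`{L_i}_{i≥1}` of Markov operators satisfying (ML1) with constants `A, B, M, λ₁`,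
(ML2) with some `ε ≤ ε₀` and a Markov operator `L₀` (itself satisfying (ML1)-type bounds
with the same constants), and (ML3) for `L₀` with the sequence `(aₙ)`, has uniform
exponential loss of memory on the zero-average space `V_s`:
`‖L^{(j,j+n−1)} g‖_s ≤ C e^{−λ n} ‖g‖_s` for all `j, n ≥ 1` and `g ∈ V_s`. -/
theorem exponential_loss_of_memory
    {V : Type*} [AddCommGroup V] [Module ℝ V]
    -- the two norms; the ambient space is `B_w = V`, `B_s` a subspace
    (nw ns : Seminorm ℝ V)
    (Bs : Submodule ℝ V)
    (hwle : ∀ x ∈ Bs, nw x ≤ ns x)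
    -- total-mass functional `μ ↦ μ(X)`
    (mass : V →ₗ[ℝ] ℝ)
    -- the constants
    (A B M lam₁ : ℝ) (hA : 0 ≤ A) (hB : 1 ≤ B) (hM : 0 ≤ M)
    (hlam₁0 : 0 ≤ lam₁) (hlam₁ : lam₁ < 1)
    (a : ℕ → ℝ) (ha0 : ∀ n, 0 ≤ a n) (halim : Tendsto a atTop (nhds 0)) :
    ∃ ε₀ > (0:ℝ), ∃ C > (0:ℝ), ∃ lam > (0:ℝ),
      ∀ (L : ℕ → Module.End ℝ V) (L₀ : Module.End ℝ V) (ε : ℝ),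
        0 < ε → ε ≤ ε₀ →
        -- the operators map `B_s` to itself and are Markov (mass preserving)
        (∀ i, 1 ≤ i → ∀ f ∈ Bs, L i f ∈ Bs) →
        (∀ f ∈ Bs, L₀ f ∈ Bs) →
        (∀ i, 1 ≤ i → ∀ f, mass (L i f) = mass f) →
        (∀ f, mass (L₀ f) = mass f) →
        -- (ML1)
        (∀ i n : ℕ, 1 ≤ n → ∀ f ∈ Bs, nw (opComp L i n f) ≤ M * nw f) →
        (∀ i n : ℕ, 1 ≤ n → ∀ f ∈ Bs,
          ns (opComp L i n f) ≤ A * lam₁ ^ n * ns f + B * nw f) →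
        -- (ML1)-type bounds for `L₀` with the same constants
        (∀ n : ℕ, 1 ≤ n → ∀ f ∈ Bs, nw ((L₀ ^ n) f) ≤ M * nw f) →
        (∀ n : ℕ, 1 ≤ n → ∀ f ∈ Bs,
          ns ((L₀ ^ n) f) ≤ A * lam₁ ^ n * ns f + B * nw f) →
        -- (ML2): `‖L₀ − L_j‖_{B_s→B_w} ≤ ε` for every `j ≥ 1`
        (∀ j, 1 ≤ j → ∀ f ∈ Bs, nw (L₀ f - L j f) ≤ ε * ns f) →
        -- (ML3): convergence to equilibrium of `L₀` on the zero-average space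
        (∀ n : ℕ, 1 ≤ n → ∀ v ∈ Bs, mass v = 0 → nw ((L₀ ^ n) v) ≤ a n * ns v) →
        -- conclusion: exponential loss of memory
        ∀ j n : ℕ, 1 ≤ j → 1 ≤ n → ∀ g ∈ Bs, mass g = 0 →
          ns (opComp L (j - 1) n g) ≤ C * Real.exp (-lam * n) * ns g := by
  have hAB1 : (1:ℝ) ≤ A + B := by linarith
  have hAB0 : (0:ℝ) ≤ A + B := by linarith
  -- choose N
  have htend : Tendsto (fun n => A * lam₁ ^ n * (A+B) + B * a n) atTop (nhds 0) := by
    have h1 : Tendsto (fun n : ℕ => A * lam₁ ^ n * (A+B)) atTop (nhds 0) := by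
      have := (tendsto_pow_atTop_nhds_zero_of_lt_one hlam₁0 hlam₁).const_mul A
      simpa using this.mul_const (A+B)
    have h2 := halim.const_mul B
    simpa using h1.add h2
  obtain ⟨N, hN4, hN1⟩ :
      ∃ N : ℕ, (A * lam₁ ^ N * (A+B) + B * a N < 1/4) ∧ 1 ≤ N := by
    have h := (htend.eventually_lt_const (by norm_num : (0:ℝ) < 1/4)).and
      (eventually_ge_atTop 1)
    exact h.exists
  set M' : ℝ := max M 1 with hM'def
  have hM'1 : (1:ℝ) ≤ M' := le_max_right _ _
  have hMM' : M ≤ M' := le_max_left _ _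
  have hM'0 : (0:ℝ) ≤ M' := by linarith
  set K : ℝ := (A+B) * N * M'^N with hKdef
  have hK0 : 0 ≤ K := by positivity
  clear_value M'
  clear_value K
  have hden : (0:ℝ) < 4*B*(K+1) := by nlinarith
  refine ⟨1/(4*B*(K+1)), by positivity, 2*(A+B), by linarith, Real.log 2 / (2*N),
    by positivity, ?_⟩
  intro L L₀ ε hε hεε₀ hLBs hL₀Bs hLmass hL₀mass hML1w hML1s hML1w₀ hML1s₀ hML2 hML3
  -- basic closure facts
  have hBsC : ∀ i n, ∀ f ∈ Bs, opComp L i n f ∈ Bs := by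
    intro i n
    induction n with
    | zero => intro f hf; simpa [opComp] using hf
    | succ n ih =>
      intro f hf
      show L (i+n+1) (opComp L i n f) ∈ Bs
      exact hLBs _ (by omega) _ (ih f hf)
  have hmassC : ∀ i n f, mass (opComp L i n f) = mass f := by
    intro i n
    induction n with
    | zero => intro f; simp [opComp]
    | succ n ih =>
      intro f
      show mass (L (i+n+1) (opComp L i n f)) = mass f
      rw [hLmass _ (by omega), ih]
  have hBs0 : ∀ n, ∀ f ∈ Bs, (L₀^n) f ∈ Bs := by
    intro n
    induction n with
    | zero => intro f hf; simpa using hf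
    | succ n ih =>
      intro f hf
      rw [pow_succ', Module.End.mul_apply]
      exact hL₀Bs _ (ih f hf)
  -- uniform strong-norm bound
  have hsAll : ∀ i n, ∀ f ∈ Bs, ns (opComp L i n f) ≤ (A+B) * ns f := by
    intro i n f hf
    match n with
    | 0 =>
      have h0 : opComp L i 0 f = f := rfl
      rw [h0]
      nlinarith [apply_nonneg ns f]
    | n+1 =>
      have h := hML1s i (n+1) (by omega) f hf
      have hl : lam₁ ^ (n+1) ≤ 1 := pow_le_one₀ hlam₁0 hlam₁.le
      have hwf := hwle f hf
      have hlp : 0 ≤ lam₁ ^ (n+1) := pow_nonneg hlam₁0 _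
      have e1 : A * lam₁ ^ (n+1) * ns f ≤ A * ns f :=
        mul_le_mul_of_nonneg_right (mul_le_of_le_one_right hA hl) (apply_nonneg ns f)
      have e2 : B * nw f ≤ B * ns f := by nlinarith [apply_nonneg nw f]
      linarith
  -- telescoping estimate
  have htel : ∀ i n, ∀ f ∈ Bs,
      nw ((L₀^n) f - opComp L i n f) ≤ ε * ((A+B) * n * M'^n) * ns f := by
    intro i n
    induction n with
    | zero =>
      intro f hf
      have h0 : opComp L i 0 f = f := rfl
      simp [h0]
    | succ n ih =>
      intro f hf
      have hw : opComp L i n f ∈ Bs := hBsC i n f hf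
      have hd : (L₀^n) f - opComp L i n f ∈ Bs :=
        Submodule.sub_mem _ (hBs0 n f hf) hw
      have key : (L₀^(n+1)) f - opComp L i (n+1) f
          = L₀ ((L₀^n) f - opComp L i n f)
            + (L₀ (opComp L i n f) - L (i+n+1) (opComp L i n f)) := by
        rw [pow_succ']
        show (L₀ * L₀^n) f - L (i+n+1) (opComp L i n f) = _
        rw [Module.End.mul_apply, map_sub]
        abel
      rw [key]
      have t1 : nw (L₀ ((L₀^n) f - opComp L i n f))
          ≤ M * nw ((L₀^n) f - opComp L i n f) := by
        have := hML1w₀ 1 le_rfl _ hd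
        simpa [pow_one] using this
      have t2 : nw (L₀ (opComp L i n f) - L (i+n+1) (opComp L i n f))
          ≤ ε * ns (opComp L i n f) := hML2 (i+n+1) (by omega) _ hw
      have t3 := hsAll i n f hf
      have tri := map_add_le_add nw (L₀ ((L₀^n) f - opComp L i n f))
        (L₀ (opComp L i n f) - L (i+n+1) (opComp L i n f))
      have ihh := ih f hf
      have hd0 := apply_nonneg nw ((L₀^n) f - opComp L i n f)
      have hnf := apply_nonneg ns f
      have hnw := apply_nonneg ns (opComp L i n f)
      have hpow : M'^(n+1) = M' * M'^n := by rw [pow_succ']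
      have hp1 : (1:ℝ) ≤ M'^n := one_le_pow₀ hM'1
      have hp1' : (1:ℝ) ≤ M'^(n+1) := one_le_pow₀ hM'1
      have hcast : ((n:ℝ)+1) = ((n+1 : ℕ) : ℝ) := by push_cast; ring
      rw [← hcast]
      have step1 : M * nw ((L₀^n) f - opComp L i n f)
          ≤ M' * nw ((L₀^n) f - opComp L i n f) :=
        mul_le_mul_of_nonneg_right hMM' hd0
      have step2 : M' * nw ((L₀^n) f - opComp L i n f)
          ≤ M' * (ε * ((A+B) * (n:ℝ) * M'^n) * ns f) :=
        mul_le_mul_of_nonneg_left ihh hM'0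
      have step3 : ε * ns (opComp L i n f) ≤ ε * ((A+B) * ns f) :=
        mul_le_mul_of_nonneg_left t3 hε.le
      have h0 : 0 ≤ ε * ((A+B) * ns f) :=
        mul_nonneg hε.le (mul_nonneg hAB0 hnf)
      calc nw (L₀ ((L₀^n) f - opComp L i n f)
            + (L₀ (opComp L i n f) - L (i+n+1) (opComp L i n f)))
          ≤ nw (L₀ ((L₀^n) f - opComp L i n f))
            + nw (L₀ (opComp L i n f) - L (i+n+1) (opComp L i n f)) := tri
        _ ≤ M' * (ε * ((A+B) * (n:ℝ) * M'^n) * ns f) + ε * ((A+B) * ns f) :=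
            add_le_add ((t1.trans step1).trans step2) (t2.trans step3)
        _ ≤ M' * (ε * ((A+B) * (n:ℝ) * M'^n) * ns f)
            + ε * ((A+B) * ns f) * M'^(n+1) := by
            nlinarith [le_mul_of_one_le_right h0 hp1']
        _ = ε * ((A+B) * ((n:ℝ)+1) * M'^(n+1)) * ns f := by rw [pow_succ']; ring
  -- block contraction
  have hεK : B * (ε * (K+1)) ≤ 1/4 := by
    have : ε ≤ 1/(4*B*(K+1)) := hεε₀
    rw [le_div_iff₀ hden] at this
    nlinarith
  have hblock : ∀ i, ∀ f ∈ Bs, mass f = 0 →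
      ns (opComp L i (2*N) f) ≤ (1/2) * ns f := by
    intro i f hf hm
    rw [two_mul, opComp_add]
    set w := opComp L i N f with hwdef
    clear_value w
    have hw : w ∈ Bs := by rw [hwdef]; exact hBsC i N f hf
    have h1 : ns (opComp L (i+N) N w) ≤ A * lam₁^N * ns w + B * nw w :=
      hML1s (i+N) N hN1 w hw
    have h2 : ns w ≤ (A+B) * ns f := by rw [hwdef]; exact hsAll i N f hf
    have h3 : nw ((L₀^N) f) ≤ a N * ns f := hML3 N hN1 f hf hm
    have h4 : nw ((L₀^N) f - w) ≤ ε * K * ns f := by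
      rw [hwdef, hKdef]
      have := htel i N f hf
      linarith
    have h5 : nw w ≤ a N * ns f + ε * K * ns f := by
      have hsplit : w = (L₀^N) f - ((L₀^N) f - w) := by abel
      calc nw w = nw ((L₀^N) f - ((L₀^N) f - w)) := by rw [← hsplit]
        _ ≤ nw ((L₀^N) f) + nw ((L₀^N) f - w) := map_sub_le_add nw _ _
        _ ≤ a N * ns f + ε * K * ns f := add_le_add h3 h4
    show ns ((opComp L (i+N) N * opComp L i N) f) ≤ (1/2) * ns f
    rw [Module.End.mul_apply, ← hwdef]
    have hnf := apply_nonneg ns f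
    have hnsw := apply_nonneg ns w
    have hnww := apply_nonneg nw w
    have hlp : 0 ≤ lam₁ ^ N := pow_nonneg hlam₁0 _
    have haN := ha0 N
    have c1 : A * lam₁^N * ns w ≤ A * lam₁^N * ((A+B) * ns f) :=
      mul_le_mul_of_nonneg_left h2 (mul_nonneg hA hlp)
    have c2 : B * nw w ≤ B * (a N * ns f + ε * K * ns f) :=
      mul_le_mul_of_nonneg_left h5 (by linarith)
    have c3 : (A * lam₁^N * (A+B) + B * a N) * ns f ≤ (1/4) * ns f :=
      mul_le_mul_of_nonneg_right hN4.le hnf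
    have c4 : B * (ε * K) ≤ B * (ε * (K+1)) := by nlinarith
    have c5 : B * (ε * K) * ns f ≤ (1/4) * ns f :=
      mul_le_mul_of_nonneg_right (le_trans c4 hεK) hnf
    nlinarith
  -- iteration
  have main : ∀ n i, ∀ f ∈ Bs, mass f = 0 →
      ns (opComp L i n f) ≤ (A+B) * (1/2)^(n / (2*N)) * ns f := by
    intro n
    induction n using Nat.strong_induction_on with
    | _ n ih =>
      intro i f hf hm
      by_cases hn : n < 2*N
      · rw [Nat.div_eq_of_lt hn, pow_zero, mul_one]
        exact hsAll i n f hf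
      · push_neg at hn
        obtain ⟨m, rfl⟩ : ∃ m, n = 2*N + m := ⟨n - 2*N, by omega⟩
        rw [opComp_add, Module.End.mul_apply]
        set w := opComp L i (2*N) f with hwdef
        clear_value w
        have hw : w ∈ Bs := by rw [hwdef]; exact hBsC i (2*N) f hf
        have hmw : mass w = 0 := by rw [hwdef, hmassC]; exact hm
        have hb : ns w ≤ (1/2) * ns f := by rw [hwdef]; exact hblock i f hf hm
        have ihm := ih m (by omega) (i+2*N) w hw hmw
        have hdiv : (2*N + m) / (2*N) = m / (2*N) + 1 := by
          rw [add_comm, Nat.add_div_right _ (by omega)]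
        rw [hdiv, pow_succ]
        have hp0 : (0:ℝ) ≤ (A+B) * (1/2)^(m/(2*N)) := by positivity
        calc ns (opComp L (i+2*N) m w) ≤ (A+B) * (1/2)^(m/(2*N)) * ns w := ihm
          _ ≤ (A+B) * (1/2)^(m/(2*N)) * ((1/2) * ns f) :=
            mul_le_mul_of_nonneg_left hb hp0
          _ = (A+B) * ((1/2)^(m/(2*N)) * (1/2)) * ns f := by ring
  -- conclusion
  intro j n hj hn g hg hmg
  have h := main n (j-1) g hg hmg
  have hhp := half_pow_le (n := n) hN1
  have hnsg := apply_nonneg ns g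
  calc ns (opComp L (j-1) n g) ≤ (A+B) * (1/2)^(n / (2*N)) * ns g := h
    _ ≤ (A+B) * (2 * Real.exp (-(Real.log 2 / (2*N)) * n)) * ns g := by
        apply mul_le_mul_of_nonneg_right _ hnsg
        exact mul_le_mul_of_nonneg_left hhp hAB0
    _ = 2*(A+B) * Real.exp (-(Real.log 2 / (2*(N:ℝ))) * n) * ns g := by ring_nf
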